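/- Gessel's model is decoupled: for every field k and all t, x, y ∈ k with t ≠ 0, x ≠ 0, y ≠ −1, if K(x,y) = t(1 + y + x²y + x²y²) − xy = 0, then xy = F(x) + G(y) with F(x) = 1/t − 1/x and G(y) = −1/(t(1+y)). -/

import Mathlib

/-- Gessel's model is decoupled: on the kernel curve `K(x,y) = 0` one has
`xy = F(x) + G(y)` with `F(x) = 1/t - 1/x` and `G(y) = -1/(t(1+y))`. -/
theorem gessel_decoupled {k : Type*} [Field k] (t x y : k)
    (ht : t ≠ 0) (hx : x ≠ 0) (hy1 : y ≠ -1)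
    (hK : t * (1 + y + x ^ 2 * y + x ^ 2 * y ^ 2) - x * y = 0) :
    x * y = (1 / t - 1 / x) + (-(1 / (t * (1 + y)))) := by
  have hy : 1 + y ≠ 0 := by
    intro h; apply hy1; linear_combination h
  field_simp
  linear_combination hK
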